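/- Let ρ : ℂ → ℝ be positive and 1-Lipschitz, let r > 0, and let {a_j}_{j≥1} ⊂ ℂ be a sequence such that the disks D(a_j, (r/5)·ρ(a_j)) are pairwise disjoint. Then for every m > 0 with m·r < 1 there exists an integer N, depending only on m and r, such that every point z ∈ ℂ belongs to at most N of the disks D(a_j, m·r·ρ(a_j)). If moreover the disks D(a_j, r·ρ(a_j)) cover ℂ and m ≥ 1, then every z ∈ ℂ belongs to at least one of the disks D(a_j, m·r·ρ(a_j)). -/

import Mathlib

open MeasureTheory Metric Complex ENNReal Set

noncomputable section

/-- Key counting lemma: any finite set of indices whose `m*r`-disks contain `z`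
has cardinality at most `(R/s)^2` by an area argument. -/
lemma stmt5_card_le (r m : ℝ) (hr : 0 < r) (hm : 0 < m) (hmr : m * r < 1)
    (ρ : ℂ → ℝ) (a : ℕ → ℂ) (hρ : ∀ z, 0 < ρ z) (hlip : LipschitzWith 1 ρ)
    (hdisj : ∀ j k : ℕ, j ≠ k →
      Disjoint (ball (a j) (r / 5 * ρ (a j))) (ball (a k) (r / 5 * ρ (a k))))
    (z : ℂ) (T : Finset ℕ) (hT : ∀ j ∈ T, z ∈ ball (a j) (m * r * ρ (a j))) :
    (T.card : ℝ) ≤ (((m * r + r / 5) / (1 - m * r)) / ((r / 5) / (1 + m * r))) ^ 2 := by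
  set R : ℝ := (m * r + r / 5) / (1 - m * r) with hR
  set s : ℝ := (r / 5) / (1 + m * r) with hs
  have hmr0 : 0 < m * r := mul_pos hm hr
  have h1mr : 0 < 1 - m * r := by linarith
  have h1pmr : 0 < 1 + m * r := by linarith
  have hspos : 0 < s := by positivity
  have hRpos : 0 < R := by positivity
  have hRe : R * (1 - m * r) = m * r + r / 5 := div_mul_cancel₀ _ h1mr.ne'
  have hse : s * (1 + m * r) = r / 5 := div_mul_cancel₀ _ h1pmr.ne'
  have hz := hρ z
  have key : ∀ j ∈ T, dist z (a j) < m * r * ρ (a j) ∧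
      (1 - m * r) * ρ (a j) ≤ ρ z ∧ ρ z ≤ (1 + m * r) * ρ (a j) := by
    intro j hj
    have hdz : dist z (a j) < m * r * ρ (a j) := mem_ball.mp (hT j hj)
    have hl : |ρ z - ρ (a j)| ≤ dist z (a j) := by
      have := hlip.dist_le_mul z (a j)
      simpa [Real.dist_eq] using this
    have h1 := abs_le.mp hl
    exact ⟨hdz, by nlinarith [h1.1, h1.2], by nlinarith [h1.1, h1.2]⟩
  -- small balls are contained in the big ball
  have hsub : ∀ j ∈ T, ball (a j) (r / 5 * ρ (a j)) ⊆ ball z (R * ρ z) := by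
    intro j hj w hw
    obtain ⟨hdz, hlo, _⟩ := key j hj
    have hdw : dist w (a j) < r / 5 * ρ (a j) := mem_ball.mp hw
    have haj := hρ (a j)
    have h3 : dist w z < (m * r + r / 5) * ρ (a j) := by
      calc dist w z ≤ dist w (a j) + dist (a j) z := dist_triangle _ _ _
        _ < r / 5 * ρ (a j) + m * r * ρ (a j) := by
            rw [dist_comm (a j) z]; linarith
        _ = (m * r + r / 5) * ρ (a j) := by ring
    have h2 : (m * r + r / 5) * ρ (a j) ≤ R * ρ z := by nlinarith
    exact mem_ball.mpr (lt_of_lt_of_le h3 h2)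
  -- and each has radius at least `s * ρ z`
  have hsr : ∀ j ∈ T, s * ρ z ≤ r / 5 * ρ (a j) := by
    intro j hj
    obtain ⟨_, _, hhi⟩ := key j hj
    nlinarith
  -- volume computation
  have hpw : (T : Set ℕ).Pairwise fun j k =>
      Disjoint (ball (a j) (r / 5 * ρ (a j))) (ball (a k) (r / 5 * ρ (a k))) :=
    fun j _ k _ hjk => hdisj j k hjk
  have hvol : ∑ j ∈ T, volume (ball (a j) (r / 5 * ρ (a j)))
      ≤ volume (ball z (R * ρ z)) := by
    rw [← measure_biUnion_finset hpw (fun j _ => measurableSet_ball)]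
    exact measure_mono (Set.iUnion₂_subset hsub)
  have hlow : T.card • (ENNReal.ofReal ((s * ρ z) ^ 2) * NNReal.pi)
      ≤ ∑ j ∈ T, volume (ball (a j) (r / 5 * ρ (a j))) := by
    apply Finset.card_nsmul_le_sum
    intro j hj
    rw [Complex.volume_ball,
      ← ENNReal.ofReal_pow (mul_nonneg (by positivity) (hρ (a j)).le)]
    exact mul_le_mul_left (ENNReal.ofReal_le_ofReal
      (pow_le_pow_left₀ (mul_nonneg hspos.le hz.le) (hsr j hj) 2)) _
  have hbig : volume (ball z (R * ρ z)) = ENNReal.ofReal ((R * ρ z) ^ 2) * NNReal.pi := by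
    rw [Complex.volume_ball, ← ENNReal.ofReal_pow (mul_nonneg hRpos.le hz.le)]
  have hcancel : (T.card : ℝ≥0∞) * ENNReal.ofReal ((s * ρ z) ^ 2)
      ≤ ENNReal.ofReal ((R * ρ z) ^ 2) := by
    have hπ0 : (NNReal.pi : ℝ≥0∞) ≠ 0 := by
      simp [NNReal.pi_ne_zero]
    have h := (hlow.trans hvol)
    rw [hbig, nsmul_eq_mul, ← mul_assoc] at h
    exact (ENNReal.mul_le_mul_iff_left hπ0 coe_ne_top).mp h
  have hreal : (T.card : ℝ) * (s * ρ z) ^ 2 ≤ (R * ρ z) ^ 2 := by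
    have h : ENNReal.ofReal ((T.card : ℝ) * (s * ρ z) ^ 2)
        ≤ ENNReal.ofReal ((R * ρ z) ^ 2) := by
      rw [ENNReal.ofReal_mul (by positivity), ENNReal.ofReal_natCast]
      exact hcancel
    exact (ENNReal.ofReal_le_ofReal_iff (by positivity)).mp h
  have hsz : 0 < (s * ρ z) ^ 2 := by positivity
  have heq : (R * ρ z) ^ 2 = (R / s) ^ 2 * (s * ρ z) ^ 2 := by
    field_simp
  exact le_of_mul_le_mul_right (by rw [← heq]; exact hreal) hsz

/-- finite multiplicity of `r`-lattices, and covering. -/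
theorem stmt5 (r m : ℝ) (hr : 0 < r) (hm : 0 < m) :
    ∃ N : ℕ, ∀ (ρ : ℂ → ℝ) (a : ℕ → ℂ),
      (∀ z, 0 < ρ z) → LipschitzWith 1 ρ →
      (∀ j k : ℕ, j ≠ k →
        Disjoint (ball (a j) (r / 5 * ρ (a j))) (ball (a k) (r / 5 * ρ (a k)))) →
      (m * r < 1 →
        ∀ z : ℂ, ({j | z ∈ ball (a j) (m * r * ρ (a j))} : Set ℕ).Finite ∧
          ({j | z ∈ ball (a j) (m * r * ρ (a j))} : Set ℕ).ncard ≤ N) ∧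
      ((⋃ j, ball (a j) (r * ρ (a j))) = Set.univ → 1 ≤ m →
        ∀ z : ℂ, ∃ j : ℕ, z ∈ ball (a j) (m * r * ρ (a j))) := by
  refine ⟨⌈(((m * r + r / 5) / (1 - m * r)) / ((r / 5) / (1 + m * r))) ^ 2⌉₊,
    fun ρ a hρ hlip hdisj => ⟨fun hmr z => ?_, fun hcov hm1 z => ?_⟩⟩
  · set S : Set ℕ := {j | z ∈ ball (a j) (m * r * ρ (a j))} with hS
    set N : ℕ := ⌈(((m * r + r / 5) / (1 - m * r)) / ((r / 5) / (1 + m * r))) ^ 2⌉₊ with hN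
    have hcard : ∀ T : Finset ℕ, ↑T ⊆ S → T.card ≤ N := by
      intro T hTS
      have h := stmt5_card_le r m hr hm hmr ρ a hρ hlip hdisj z T (fun j hj => hTS hj)
      exact_mod_cast Nat.cast_le.mp
        ((h.trans (Nat.le_ceil _)).trans_eq (by norm_cast))
    have hfin : S.Finite := by
      by_contra hinf
      obtain ⟨T, hTS, hTcard⟩ :=
        Set.Infinite.exists_subset_card_eq hinf (N + 1)
      have := hcard T hTS
      omega
    refine ⟨hfin, ?_⟩
    rw [Set.ncard_eq_toFinset_card S hfin]
    exact hcard hfin.toFinset (by simp)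
  · have hzm : z ∈ ⋃ j, ball (a j) (r * ρ (a j)) := hcov ▸ Set.mem_univ z
    obtain ⟨j, hj⟩ := Set.mem_iUnion.mp hzm
    refine ⟨j, mem_ball.mpr (lt_of_lt_of_le (mem_ball.mp hj) ?_)⟩
    nlinarith [mul_nonneg (mul_nonneg (sub_nonneg.mpr hm1) hr.le) (hρ (a j)).le]
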